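/- Suppose A, B > 0 with (1/2)^{2/15} < B/A < 1. Then the system y₁³ + y₂³ = A³, y₁⁵ + y₂⁵ = B⁵ has exactly two solutions in the closed first quadrant, of the form (α, β) and (β, α) with 0 < α < β. -/

import Mathlib

open Set

noncomputable def gfun (t : ℝ) : ℝ := (1 + t^5)^3 / (1 + t^3)^5

lemma gfun_contOn : ContinuousOn gfun (Icc (0:ℝ) 1) := by
  apply ContinuousOn.div (by fun_prop) (by fun_prop)
  intro x hx
  have h3 : 0 ≤ x^3 := pow_nonneg hx.1 3
  positivity

lemma gfun_deriv_neg {x : ℝ} (hx : x ∈ Ioo (0:ℝ) 1) : deriv gfun x < 0 := by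
  obtain ⟨hx0, hx1⟩ := hx
  have hd : (0:ℝ) < 1 + x^3 := by positivity
  have hu : HasDerivAt (fun t : ℝ => (1 + t^5)^3) (3 * (1 + x^5)^2 * (5 * x^4)) x := by
    have h : HasDerivAt (fun t : ℝ => 1 + t^5) (5 * x^4) x := by
      simpa using (hasDerivAt_pow 5 x).const_add 1
    simpa [Pi.pow_def, mul_comm, mul_assoc, mul_left_comm] using h.pow 3
  have hv : HasDerivAt (fun t : ℝ => (1 + t^3)^5) (5 * (1 + x^3)^4 * (3 * x^2)) x := by
    have h : HasDerivAt (fun t : ℝ => 1 + t^3) (3 * x^2) x := by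
      simpa using (hasDerivAt_pow 3 x).const_add 1
    simpa [Pi.pow_def, mul_comm, mul_assoc, mul_left_comm] using h.pow 5
  have hvne : ((1 + x^3)^5 : ℝ) ≠ 0 := by positivity
  have hder : HasDerivAt gfun
      ((3 * (1 + x^5)^2 * (5 * x^4) * (1 + x^3)^5 -
        (1 + x^5)^3 * (5 * (1 + x^3)^4 * (3 * x^2))) / ((1 + x^3)^5)^2) x := by
    exact hu.div hv hvne
  rw [hder.deriv]
  apply div_neg_of_neg_of_pos _ (by positivity)
  have key : 3 * (1 + x^5)^2 * (5 * x^4) * (1 + x^3)^5 -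
        (1 + x^5)^3 * (5 * (1 + x^3)^4 * (3 * x^2))
      = 15 * x^2 * (1 + x^5)^2 * (1 + x^3)^4 * (x^2 - 1) := by ring
  rw [key]
  apply mul_neg_of_pos_of_neg (by positivity)
  nlinarith

lemma gfun_anti : StrictAntiOn gfun (Icc (0:ℝ) 1) :=
  strictAntiOn_of_deriv_neg (convex_Icc 0 1) gfun_contOn
    (fun x hx => gfun_deriv_neg (by rwa [interior_Icc] at hx))

lemma pow_inj_nonneg {a b : ℝ} (ha : 0 ≤ a) (hb : 0 ≤ b) {n : ℕ} (hn : n ≠ 0)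
    (h : a^n = b^n) : a = b := by
  rcases lt_trichotomy a b with h' | h' | h'
  · exact absurd h (ne_of_lt (pow_lt_pow_left₀ h' ha hn))
  · exact h'
  · exact absurd h.symm (ne_of_lt (pow_lt_pow_left₀ h' hb hn))

theorem system_solutions_intermediate_ratio (A B : ℝ) (hA : 0 < A) (hB : 0 < B)
    (h1 : ((1 : ℝ) / 2) ^ ((2 : ℝ) / 15) < B / A) (h2 : B / A < 1) :
    ∃ α β : ℝ, 0 < α ∧ α < β ∧
      ∀ y₁ y₂ : ℝ, 0 ≤ y₁ → 0 ≤ y₂ →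
        ((y₁ ^ 3 + y₂ ^ 3 = A ^ 3 ∧ y₁ ^ 5 + y₂ ^ 5 = B ^ 5) ↔
          ((y₁ = α ∧ y₂ = β) ∨ (y₁ = β ∧ y₂ = α))) := by
  have hAne : A ≠ 0 := ne_of_gt hA
  set C : ℝ := (B / A) ^ 15 with hC
  have hr0 : 0 < B / A := div_pos hB hA
  have hC1 : C < 1 := pow_lt_one₀ hr0.le h2 (by norm_num)
  have hpow : (((1:ℝ)/2) ^ ((2:ℝ)/15)) ^ (15:ℕ) = 1/4 := by
    rw [← Real.rpow_natCast (((1:ℝ)/2) ^ ((2:ℝ)/15)) 15,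
      ← Real.rpow_mul (by norm_num : (0:ℝ) ≤ 1/2),
      show ((2:ℝ)/15 * (15:ℕ)) = ((2:ℕ):ℝ) by push_cast; ring,
      Real.rpow_natCast]
    norm_num
  have hC4 : (1:ℝ)/4 < C := by
    calc (1:ℝ)/4 = (((1:ℝ)/2) ^ ((2:ℝ)/15)) ^ (15:ℕ) := hpow.symm
    _ < C := pow_lt_pow_left₀ h1 (Real.rpow_nonneg (by norm_num) _) (by norm_num)
  have hg0 : gfun 0 = 1 := by norm_num [gfun]
  have hg1 : gfun 1 = 1/4 := by norm_num [gfun]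
  obtain ⟨θ, hθmem, hθeq⟩ : ∃ θ ∈ Icc (0:ℝ) 1, gfun θ = C := by
    have h := intermediate_value_Icc' (by norm_num : (0:ℝ) ≤ 1) gfun_contOn
    have hCmem : C ∈ Icc (gfun 1) (gfun 0) := by
      rw [hg0, hg1]; exact ⟨hC4.le, hC1.le⟩
    obtain ⟨θ, h₁, h₂⟩ := h hCmem
    exact ⟨θ, h₁, h₂⟩
  have hθ0 : 0 < θ := by
    rcases eq_or_lt_of_le hθmem.1 with h | h
    · exfalso; rw [← h, hg0] at hθeq; exact absurd hθeq.symm (ne_of_lt hC1)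
    · exact h
  have hθ1 : θ < 1 := by
    rcases eq_or_lt_of_le hθmem.2 with h | h
    · exfalso; rw [h, hg1] at hθeq; exact absurd hθeq (ne_of_lt hC4)
    · exact h
  have hθ3 : (0:ℝ) < 1 + θ^3 := by positivity
  have hθ5 : (0:ℝ) < 1 + θ^5 := by positivity
  have hbase : (0:ℝ) < A^3 / (1 + θ^3) := by positivity
  obtain ⟨β, hβpos, hβ3⟩ : ∃ b : ℝ, 0 < b ∧ b^3 = A^3 / (1 + θ^3) := by
    refine ⟨(A^3 / (1 + θ^3)) ^ ((1:ℝ)/3), Real.rpow_pos_of_pos hbase _, ?_⟩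
    rw [← Real.rpow_natCast ((A^3 / (1 + θ^3)) ^ ((1:ℝ)/3)) 3,
      ← Real.rpow_mul hbase.le,
      show ((1:ℝ)/3 * (3:ℕ)) = ((1:ℕ):ℝ) by push_cast; ring,
      Real.rpow_natCast, pow_one]
  have hβ3' : β^3 * (1 + θ^3) = A^3 := by
    rw [hβ3, div_mul_cancel₀ _ (ne_of_gt hθ3)]
  have hαpos : 0 < θ * β := mul_pos hθ0 hβpos
  have hαβ : θ * β < β := by nlinarith
  have hgθ : (1 + θ^5)^3 / (1 + θ^3)^5 = B^15 / A^15 := by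
    have h := hθeq
    rw [hC, div_pow] at h
    simpa [gfun] using h
  have hgθ' : (1 + θ^5)^3 * A^15 = B^15 * (1 + θ^3)^5 := by
    rw [div_eq_div_iff (by positivity) (by positivity)] at hgθ
    exact hgθ
  have h15' : β^15 * (1 + θ^3)^5 = A^15 := by
    have h : β^15 = (A^3 / (1 + θ^3))^5 := by
      rw [show (15:ℕ) = 3*5 from rfl, pow_mul, hβ3]
    rw [h, div_pow, ← pow_mul, div_mul_cancel₀ _ (by positivity : ((1+θ^3)^5 : ℝ) ≠ 0)]
  have hβ5 : β^5 * (1 + θ^5) = B^5 := by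
    apply pow_inj_nonneg (by positivity) (by positivity) three_ne_zero
    apply mul_right_cancel₀ (by positivity : ((1+θ^3)^5 : ℝ) ≠ 0)
    calc (β^5 * (1+θ^5))^3 * (1+θ^3)^5 = (β^15 * (1+θ^3)^5) * (1+θ^5)^3 := by ring
    _ = A^15 * (1+θ^5)^3 := by rw [h15']
    _ = (B^5)^3 * (1+θ^3)^5 := by linear_combination hgθ'
  have main : ∀ y₁ y₂ : ℝ, 0 < y₂ → y₂ ≤ y₁ →
      y₁ ^ 3 + y₂ ^ 3 = A ^ 3 → y₁ ^ 5 + y₂ ^ 5 = B ^ 5 → y₁ = β ∧ y₂ = θ * β := by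
    intro y₁ y₂ hy₂ hle e3 e5
    have hy₁ : 0 < y₁ := lt_of_lt_of_le hy₂ hle
    have ht0 : 0 < y₂ / y₁ := div_pos hy₂ hy₁
    have ht1 : y₂ / y₁ ≤ 1 := div_le_one_of_le₀ hle hy₁.le
    have hy₂eq : y₂ = (y₂ / y₁) * y₁ := by field_simp
    have e3' : y₁^3 * (1 + (y₂/y₁)^3) = A^3 := by
      rw [← e3, div_pow]; field_simp
    have e5' : y₁^5 * (1 + (y₂/y₁)^5) = B^5 := by
      rw [← e5, div_pow]; field_simp
    have hA15 : A^15 = y₁^15 * (1 + (y₂/y₁)^3)^5 := by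
      rw [show (15:ℕ) = 3*5 from rfl, pow_mul, ← e3', mul_pow, ← pow_mul]
    have hB15 : B^15 = y₁^15 * (1 + (y₂/y₁)^5)^3 := by
      rw [show (15:ℕ) = 5*3 from rfl, pow_mul, ← e5', mul_pow, ← pow_mul]
    have ht3 : (0:ℝ) < 1 + (y₂/y₁)^3 := by positivity
    have hgt : gfun (y₂/y₁) = C := by
      have hC' : C = B^15 / A^15 := by rw [hC, div_pow]
      rw [hC', gfun, hA15, hB15]
      rw [div_eq_div_iff (by positivity) (by positivity)]
      ring
    have htθ : y₂/y₁ = θ := gfun_anti.injOn ⟨ht0.le, ht1⟩ hθmem (hgt.trans hθeq.symm)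
    have hy₁β : y₁ = β := by
      apply pow_inj_nonneg hy₁.le hβpos.le three_ne_zero
      apply mul_right_cancel₀ (ne_of_gt hθ3)
      rw [hβ3', ← htθ]
      exact e3'
    refine ⟨hy₁β, ?_⟩
    rw [hy₂eq, htθ, hy₁β]
  refine ⟨θ * β, β, hαpos, hαβ, ?_⟩
  intro y₁ y₂ hy₁ hy₂
  constructor
  · rintro ⟨e3, e5⟩
    have hy₁pos : 0 < y₁ := by
      rcases eq_or_lt_of_le hy₁ with h | h
      · exfalso
        rw [← h] at e3 e5
        simp only [ne_eq, OfNat.ofNat_ne_zero, not_false_eq_true, zero_pow, zero_add] at e3 e5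
        have hyA : y₂ = A := pow_inj_nonneg hy₂ hA.le three_ne_zero e3
        have hyB : y₂ = B := pow_inj_nonneg hy₂ hB.le (by norm_num) e5
        rw [hyA] at hyB
        rw [← hyB] at h2
        simp [div_self hAne] at h2
      · exact h
    have hy₂pos : 0 < y₂ := by
      rcases eq_or_lt_of_le hy₂ with h | h
      · exfalso
        rw [← h] at e3 e5
        simp only [ne_eq, OfNat.ofNat_ne_zero, not_false_eq_true, zero_pow, add_zero] at e3 e5
        have hyA : y₁ = A := pow_inj_nonneg hy₁ hA.le three_ne_zero e3
        have hyB : y₁ = B := pow_inj_nonneg hy₁ hB.le (by norm_num) e5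
        rw [hyA] at hyB
        rw [← hyB] at h2
        simp [div_self hAne] at h2
      · exact h
    rcases le_total y₂ y₁ with h | h
    · exact Or.inr (main y₁ y₂ hy₂pos h e3 e5)
    · have hm := main y₂ y₁ hy₁pos h (by linarith) (by linarith)
      exact Or.inl ⟨hm.2, hm.1⟩
  · rintro (⟨h₁, h₂⟩ | ⟨h₁, h₂⟩) <;> subst h₁ <;> subst h₂ <;> constructor
    · linear_combination hβ3'
    · linear_combination hβ5
    · linear_combination hβ3'
    · linear_combination hβ5
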